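/- In ℤ[ρ] for a = -1 (so ρ is a root of x^3 + x^2 - 2x - 1), the rational integer 7 is a sum of 4 squares of elements of ℤ[ρ] but not a sum of 3 squares of elements of ℤ[ρ]. -/

import Mathlib

/-- The 36 possible values mod 8 of squares in ℤ[ρ], encoded as a*64+b*8+c. -/
def SN : List ℕ := [0, 1, 4, 32, 33, 36, 57, 61, 64, 81, 85, 90, 100, 113, 117, 122, 136, 172, 251, 255, 256, 257, 260, 281, 285, 288, 289, 292, 324, 350, 352, 382, 392, 428, 507, 511]

def good (s t u : ℕ) : Bool :=
  decide (¬ ((s/64 + t/64 + u/64) % 8 = 7 ∧ (s/8 + t/8 + u/8) % 8 = 0 ∧ (s + t + u) % 8 = 0))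

set_option maxRecDepth 10000 in
theorem sum3N : (SN.all fun s => SN.all fun t => SN.all fun u => good s t u) = true := by decide

abbrev V8 := ZMod 8 × ZMod 8 × ZMod 8

def sqv (v : V8) : V8 :=
  (v.1^2 - v.2.2^2 + 2*v.2.1*v.2.2,
   2*v.1*v.2.1 - v.2.2^2 + 4*v.2.1*v.2.2,
   v.2.1^2 + 3*v.2.2^2 + 2*v.1*v.2.2 - 2*v.2.1*v.2.2)

def enc (v : V8) : ℕ := v.1.val * 64 + v.2.1.val * 8 + v.2.2.val

set_option maxRecDepth 10000 in
theorem memSN : ∀ v : V8, enc (sqv v) ∈ SN := by decide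

/-- Descent: the norm form has no nontrivial integer zeros. -/
theorem normFormZero : ∀ (n : ℕ) (a b c : ℤ), a.natAbs + b.natAbs + c.natAbs = n →
    a^3 - a^2*b + 5*a^2*c - 2*a*b^2 - a*b*c + 6*a*c^2 + b^3 - b^2*c - 2*b*c^2 + c^3 = 0 →
    a = 0 ∧ b = 0 ∧ c = 0 := by
  intro n
  induction n using Nat.strong_induction_on with
  | _ n ih =>
    intro a b c hn hN
    have hmod : ∀ x y z : ZMod 2,
        x^3 - x^2*y + 5*x^2*z - 2*x*y^2 - x*y*z + 6*x*z^2 + y^3 - y^2*z - 2*y*z^2 + z^3 = 0 →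
        x = 0 ∧ y = 0 ∧ z = 0 := by decide
    have hc : ((a : ZMod 2))^3 - (a:ZMod 2)^2*(b:ZMod 2) + 5*(a:ZMod 2)^2*(c:ZMod 2)
        - 2*(a:ZMod 2)*(b:ZMod 2)^2 - (a:ZMod 2)*(b:ZMod 2)*(c:ZMod 2)
        + 6*(a:ZMod 2)*(c:ZMod 2)^2 + (b:ZMod 2)^3 - (b:ZMod 2)^2*(c:ZMod 2)
        - 2*(b:ZMod 2)*(c:ZMod 2)^2 + (c:ZMod 2)^3 = 0 := by
      exact_mod_cast congrArg (fun t : ℤ => (t : ZMod 2)) hN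
    obtain ⟨ha, hb, hc'⟩ := hmod _ _ _ hc
    rw [ZMod.intCast_zmod_eq_zero_iff_dvd] at ha hb hc'
    obtain ⟨a', rfl⟩ := ha
    obtain ⟨b', rfl⟩ := hb
    obtain ⟨c', rfl⟩ := hc'
    have hN' : a'^3 - a'^2*b' + 5*a'^2*c' - 2*a'*b'^2 - a'*b'*c' + 6*a'*c'^2 + b'^3
        - b'^2*c' - 2*b'*c'^2 + c'^3 = 0 := by
      have h8 : (8:ℤ) * (a'^3 - a'^2*b' + 5*a'^2*c' - 2*a'*b'^2 - a'*b'*c' + 6*a'*c'^2 + b'^3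
          - b'^2*c' - 2*b'*c'^2 + c'^3) = 0 := by linear_combination hN
      exact (mul_eq_zero.mp h8).resolve_left (by norm_num)
    have habs : (2*a').natAbs = 2 * a'.natAbs := by rw [Int.natAbs_mul]; rfl
    have hbabs : (2*b').natAbs = 2 * b'.natAbs := by rw [Int.natAbs_mul]; rfl
    have hcabs : (2*c').natAbs = 2 * c'.natAbs := by rw [Int.natAbs_mul]; rfl
    rcases Nat.eq_zero_or_pos n with h0 | hpos
    · refine ⟨Int.natAbs_eq_zero.mp ?_, Int.natAbs_eq_zero.mp ?_, Int.natAbs_eq_zero.mp ?_⟩ <;> omega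
    · obtain ⟨ra, rb, rc⟩ := ih (a'.natAbs + b'.natAbs + c'.natAbs) (by omega) a' b' c' rfl hN'
      exact ⟨by rw [ra, mul_zero], by rw [rb, mul_zero], by rw [rc, mul_zero]⟩

/-- Linear independence of 1, ρ, ρ² over ℤ. -/
theorem indep (ρ : ℝ) (hρ : ρ ^ 3 + ρ ^ 2 - 2 * ρ - 1 = 0) (a b c : ℤ)
    (h : (a:ℝ) + b*ρ + c*ρ^2 = 0) : a = 0 ∧ b = 0 ∧ c = 0 := by
  have hNR : ((a^3 - a^2*b + 5*a^2*c - 2*a*b^2 - a*b*c + 6*a*c^2 + b^3 - b^2*c - 2*b*c^2 + c^3 : ℤ) : ℝ) = 0 := by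
    push_cast
    linear_combination ((a:ℝ)^2 - a*b + 5*a*c - 2*b^2 + b*c + 5*c^2
        + (-(a:ℝ)*b + b^2 - b*c - c^2)*ρ + (-(a:ℝ)*c + b^2 - b*c - 2*c^2)*ρ^2) * h
      + ((-(b:ℝ)^3 + b^2*c + 2*b*c^2 + 2*a*b*c - a*c^2 - c^3)
        + ((a:ℝ)*c^2 + b*c^2 - b^2*c + 2*c^3)*ρ) * hρ
  have hN : (a^3 - a^2*b + 5*a^2*c - 2*a*b^2 - a*b*c + 6*a*c^2 + b^3 - b^2*c - 2*b*c^2 + c^3 : ℤ) = 0 := by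
    exact_mod_cast hNR
  exact normFormZero _ a b c rfl hN

theorem seven_four_squares_a_neg_one (ρ : ℝ)
    (hρ : ρ ^ 3 + ρ ^ 2 - 2 * ρ - 1 = 0) :
    (∃ f : Fin 4 → ℝ, (∀ i, ∃ x y z : ℤ, f i = (x : ℝ) + y * ρ + z * ρ ^ 2) ∧
      (7 : ℝ) = ∑ i, (f i) ^ 2) ∧
    ¬ ∃ f : Fin 3 → ℝ, (∀ i, ∃ x y z : ℤ, f i = (x : ℝ) + y * ρ + z * ρ ^ 2) ∧
      (7 : ℝ) = ∑ i, (f i) ^ 2 := by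
  constructor
  · refine ⟨![2,1,1,1], ?_, ?_⟩
    · intro i
      fin_cases i
      · exact ⟨2, 0, 0, by norm_num⟩
      · exact ⟨1, 0, 0, by norm_num⟩
      · exact ⟨1, 0, 0, by norm_num⟩
      · exact ⟨1, 0, 0, by norm_num⟩
    · rw [Fin.sum_univ_four]
      have h3 : (![2,1,1,1] : Fin 4 → ℝ) 3 = 1 := rfl
      norm_num [Matrix.cons_val_two, Matrix.vecHead, Matrix.vecTail, h3]
  · rintro ⟨f, hf, hsum⟩
    obtain ⟨x1, y1, z1, h1⟩ := hf 0
    obtain ⟨x2, y2, z2, h2⟩ := hf 1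
    obtain ⟨x3, y3, z3, h3⟩ := hf 2
    rw [Fin.sum_univ_three, h1, h2, h3] at hsum
    obtain ⟨k0, k1, k2⟩ := indep ρ hρ
      ((x1^2 - z1^2 + 2*y1*z1) + (x2^2 - z2^2 + 2*y2*z2) + (x3^2 - z3^2 + 2*y3*z3) - 7)
      ((2*x1*y1 - z1^2 + 4*y1*z1) + (2*x2*y2 - z2^2 + 4*y2*z2) + (2*x3*y3 - z3^2 + 4*y3*z3))
      ((y1^2 + 3*z1^2 + 2*x1*z1 - 2*y1*z1) + (y2^2 + 3*z2^2 + 2*x2*z2 - 2*y2*z2)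
        + (y3^2 + 3*z3^2 + 2*x3*z3 - 2*y3*z3))
      (by
        push_cast
        linear_combination (-1 : ℝ) * hsum
          + (-(((z1:ℝ)^2 + z2^2 + z3^2)*(ρ-1) + 2*(y1:ℝ)*z1 + 2*(y2:ℝ)*z2 + 2*(y3:ℝ)*z3)) * hρ)
    -- integer equations
    have E0 : (x1^2 - z1^2 + 2*y1*z1) + (x2^2 - z2^2 + 2*y2*z2) + (x3^2 - z3^2 + 2*y3*z3) = 7 := by omega
    -- to ZMod 8
    set u1 : V8 := ((x1 : ZMod 8), (y1 : ZMod 8), (z1 : ZMod 8)) with hu1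
    set u2 : V8 := ((x2 : ZMod 8), (y2 : ZMod 8), (z2 : ZMod 8)) with hu2
    set u3 : V8 := ((x3 : ZMod 8), (y3 : ZMod 8), (z3 : ZMod 8)) with hu3
    clear_value u1 u2 u3
    have e1 : (sqv u1).1 + (sqv u2).1 + (sqv u3).1 = 7 := by
      have := congrArg (fun t : ℤ => (t : ZMod 8)) E0
      push_cast at this
      simp only [sqv, hu1, hu2, hu3]
      linear_combination this
    have e2 : (sqv u1).2.1 + (sqv u2).2.1 + (sqv u3).2.1 = 0 := by
      have := congrArg (fun t : ℤ => (t : ZMod 8)) k1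
      push_cast at this
      simp only [sqv, hu1, hu2, hu3]
      linear_combination this
    have e3 : (sqv u1).2.2 + (sqv u2).2.2 + (sqv u3).2.2 = 0 := by
      have := congrArg (fun t : ℤ => (t : ZMod 8)) k2
      push_cast at this
      simp only [sqv, hu1, hu2, hu3]
      linear_combination this
    -- val facts
    have hv1 : ((sqv u1).1.val + (sqv u2).1.val + (sqv u3).1.val) % 8 = 7 := by
      have h := congrArg ZMod.val e1
      rw [ZMod.val_add, ZMod.val_add] at h
      have h7 : (7 : ZMod 8).val = 7 := rfl
      omega
    have hv2 : ((sqv u1).2.1.val + (sqv u2).2.1.val + (sqv u3).2.1.val) % 8 = 0 := by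
      have h := congrArg ZMod.val e2
      rw [ZMod.val_add, ZMod.val_add] at h
      have h0 : (0 : ZMod 8).val = 0 := rfl
      omega
    have hv3 : ((sqv u1).2.2.val + (sqv u2).2.2.val + (sqv u3).2.2.val) % 8 = 0 := by
      have h := congrArg ZMod.val e3
      rw [ZMod.val_add, ZMod.val_add] at h
      have h0 : (0 : ZMod 8).val = 0 := rfl
      omega
    -- memberships and final contradiction
    have hm1 := memSN u1
    have hm2 := memSN u2
    have hm3 := memSN u3
    have hall := List.all_eq_true.mp sum3N _ hm1
    have hall2 := List.all_eq_true.mp hall _ hm2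
    have hall3 := List.all_eq_true.mp hall2 _ hm3
    rw [good, decide_eq_true_iff] at hall3
    apply hall3
    have b11 : (sqv u1).1.val < 8 := ZMod.val_lt _
    have b12 : (sqv u1).2.1.val < 8 := ZMod.val_lt _
    have b13 : (sqv u1).2.2.val < 8 := ZMod.val_lt _
    have b21 : (sqv u2).1.val < 8 := ZMod.val_lt _
    have b22 : (sqv u2).2.1.val < 8 := ZMod.val_lt _
    have b23 : (sqv u2).2.2.val < 8 := ZMod.val_lt _
    have b31 : (sqv u3).1.val < 8 := ZMod.val_lt _
    have b32 : (sqv u3).2.1.val < 8 := ZMod.val_lt _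
    have b33 : (sqv u3).2.2.val < 8 := ZMod.val_lt _
    have d1 : enc (sqv u1) = (sqv u1).1.val * 64 + (sqv u1).2.1.val * 8 + (sqv u1).2.2.val := rfl
    have d2 : enc (sqv u2) = (sqv u2).1.val * 64 + (sqv u2).2.1.val * 8 + (sqv u2).2.2.val := rfl
    have d3 : enc (sqv u3) = (sqv u3).1.val * 64 + (sqv u3).2.1.val * 8 + (sqv u3).2.2.val := rfl
    have d1' : enc (sqv u1) / 64 = (sqv u1).1.val := by omega
    have d2' : enc (sqv u2) / 64 = (sqv u2).1.val := by omega
    have d3' : enc (sqv u3) / 64 = (sqv u3).1.val := by omega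
    have f1' : enc (sqv u1) / 8 % 8 = (sqv u1).2.1.val := by omega
    have f2' : enc (sqv u2) / 8 % 8 = (sqv u2).2.1.val := by omega
    have f3' : enc (sqv u3) / 8 % 8 = (sqv u3).2.1.val := by omega
    refine ⟨by omega, by omega, by omega⟩
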